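/- Let N ≥ 1 and let P = (P_{ij}) and Q = (Q_{ij}) be N×N row-stochastic matrices with nonnegative real entries (Σ_j P_{ij} = Σ_j Q_{ij} = 1 for all i). Let D = diag(D₁,…,D_N) and D' = diag(D'₁,…,D'_N) be diagonal complex matrices with |D_j| = |D'_j| = 1 for all j, and set R = P·D·P·Q·D'·Q. Then for every i: Σ_m |R_{im}| ≤ 1. Moreover, if Σ_m |R_{im}| = 1 for some i, then for every m there exists c ∈ ℂ such that D_j·D'_l = c for all pairs (j,l) with P_{ij} ≠ 0, (PQ)_{jl} ≠ 0 and Q_{lm} ≠ 0. -/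

import Mathlib

open Finset Matrix

lemma abs_sum_key {ι : Type*} (s : Finset ι) (x : ι → ℂ)
    (h : ‖∑ k ∈ s, x k‖ = ∑ k ∈ s, ‖x k‖) :
    ∃ c : ℂ, ∀ k ∈ s, x k = ‖x k‖ * c := by
  set S := ∑ k ∈ s, x k with hSdef
  by_cases hS : S = 0
  · refine ⟨1, fun k hk => ?_⟩
    have h0 : ∑ k ∈ s, ‖x k‖ = 0 := by rw [← h, hS]; simp
    have := (Finset.sum_eq_zero_iff_of_nonneg (fun k _ => norm_nonneg _)).mp h0 k hk
    have hx : x k = 0 := by simpa using this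
    simp [hx, this]
  · have habsS : (0:ℝ) < ‖S‖ := by
      simpa [norm_pos_iff] using hS
    set u : ℂ := (starRingEnd ℂ) S / (‖S‖ : ℂ) with hu
    have hune : ‖u‖ = 1 := by
      rw [hu, norm_div, Complex.norm_conj, Complex.norm_real, Real.norm_eq_abs, abs_of_pos habsS,
        div_self habsS.ne']
    have huS : u * S = (‖S‖ : ℂ) := by
      rw [hu, div_mul_eq_mul_div, Complex.conj_mul', sq,
        mul_div_assoc]
      rw [div_self, mul_one]
      exact_mod_cast habsS.ne'
    have hterm : ∀ k ∈ s, (u * x k).re ≤ ‖x k‖ := by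
      intro k _
      calc (u * x k).re ≤ ‖u * x k‖ := Complex.re_le_norm _
        _ = ‖x k‖ := by rw [norm_mul, hune, one_mul]
    have hsum : ∑ k ∈ s, (u * x k).re = ∑ k ∈ s, ‖x k‖ := by
      rw [← h]
      have : ∑ k ∈ s, (u * x k).re = (u * S).re := by
        rw [hSdef, Finset.mul_sum, Complex.re_sum]
      rw [this, huS, Complex.ofReal_re]
    have heq : ∀ k ∈ s, (u * x k).re = ‖x k‖ := by
      intro k hk
      by_contra hne
      have hlt : (u * x k).re < ‖x k‖ := lt_of_le_of_ne (hterm k hk) hne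
      have := Finset.sum_lt_sum (fun k hk => hterm k hk) ⟨k, hk, hlt⟩
      exact absurd hsum (ne_of_lt this)
    refine ⟨S / (‖S‖ : ℂ), fun k hk => ?_⟩
    have hz : u * x k = (‖x k‖ : ℂ) := by
      have h1 : (u * x k).re = ‖u * x k‖ := by
        rw [heq k hk, norm_mul, hune, one_mul]
      have h2 : (u * x k).im = 0 := by
        have := Complex.sq_norm (u * x k)
        rw [← h1] at this
        have : (u * x k).im ^ 2 = 0 := by
          have h3 := Complex.normSq_apply (u * x k)
          nlinarith [this, h3]
        simpa [pow_eq_zero_iff] using this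
      apply Complex.ext
      · rw [heq k hk, Complex.ofReal_re]
      · rw [h2, Complex.ofReal_im]
    have hu0 : u ≠ 0 := by
      intro h0; rw [h0] at hune; simp at hune
    have hSne : (‖S‖ : ℂ) ≠ 0 := by exact_mod_cast habsS.ne'
    have hconj : (starRingEnd ℂ) S * S = (‖S‖ : ℂ) ^ 2 := by
      rw [Complex.conj_mul']
    have : u * (‖x k‖ * (S / (‖S‖ : ℂ))) = u * x k := by
      rw [hz, hu]
      field_simp
      linear_combination (‖x k‖ : ℂ) * hconj
    exact (mul_left_cancel₀ hu0 this).symm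

/-- The matrix lemma inside the proof of Lemma 9 of the paper: if `P, Q` are row-stochastic
matrices with nonnegative entries, `D, D'` are diagonal unitary matrices, and
`R = P·D·P·Q·D'·Q`, then every row of `R` has `ℓ¹`-norm at most `1`, and in the case of
equality the products `D_j D'_l` are constant along the support of the corresponding
transitions. -/
theorem stochastic_unitary_contraction
    (N : ℕ) (hN : 1 ≤ N)
    (P Q : Matrix (Fin N) (Fin N) ℝ)
    (hP0 : ∀ i j, 0 ≤ P i j) (hQ0 : ∀ i j, 0 ≤ Q i j)
    (hProw : ∀ i, ∑ j, P i j = 1) (hQrow : ∀ i, ∑ j, Q i j = 1)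
    (d d' : Fin N → ℂ)
    (hd : ∀ j, ‖d j‖ = 1) (hd' : ∀ j, ‖d' j‖ = 1)
    (R : Matrix (Fin N) (Fin N) ℂ)
    (hR : R = P.map (fun x => (x : ℂ)) * Matrix.diagonal d * P.map (fun x => (x : ℂ)) *
              Q.map (fun x => (x : ℂ)) * Matrix.diagonal d' * Q.map (fun x => (x : ℂ))) :
    (∀ i, (∑ m, ‖R i m‖) ≤ 1) ∧
    (∀ i, (∑ m, ‖R i m‖) = 1 →
      ∀ m, ∃ c : ℂ, ∀ j l, P i j ≠ 0 → (P * Q) j l ≠ 0 → Q l m ≠ 0 →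
        d j * d' l = c) := by
  -- nonnegativity of P*Q entries
  have hPQ0 : ∀ j l, 0 ≤ (P * Q) j l := by
    intro j l
    rw [Matrix.mul_apply]
    exact Finset.sum_nonneg fun k _ => mul_nonneg (hP0 j k) (hQ0 k l)
  have hPQrow : ∀ j, ∑ l, (P * Q) j l = 1 := by
    intro j
    simp only [Matrix.mul_apply]
    rw [Finset.sum_comm]
    simp [← Finset.mul_sum, hQrow, hProw j]
  -- the entrywise formula for R
  have hRf : ∀ i m, R i m =
      ∑ l, ∑ j, (P i j : ℂ) * d j * ((P * Q) j l : ℂ) * d' l * (Q l m : ℂ) := by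
    intro i m
    have e1 : R = (P.map (fun x => (x : ℂ)) * Matrix.diagonal d) *
        (P.map (fun x => (x : ℂ)) * Q.map (fun x => (x : ℂ))) * Matrix.diagonal d' *
        Q.map (fun x => (x : ℂ)) := by
      rw [hR]; simp only [Matrix.mul_assoc]
    have hB : ∀ j l, (P.map (fun x => (x : ℂ)) * Q.map (fun x => (x : ℂ))) j l
        = ((P * Q) j l : ℂ) := by
      intro j l
      rw [Matrix.mul_apply, Matrix.mul_apply]
      push_cast
      simp [Matrix.map_apply]
    rw [e1, Matrix.mul_apply]
    refine Finset.sum_congr rfl fun l _ => ?_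
    rw [Matrix.mul_diagonal, Matrix.mul_apply, Finset.sum_mul, Finset.sum_mul]
    refine Finset.sum_congr rfl fun j _ => ?_
    rw [Matrix.mul_diagonal, hB, Matrix.map_apply]
    rfl
  -- absolute value of each term
  have habs_f : ∀ i m j l, ‖(P i j : ℂ) * d j * ((P * Q) j l : ℂ) * d' l * (Q l m : ℂ)‖
      = P i j * (P * Q) j l * Q l m := by
    intro i m j l
    rw [norm_mul, norm_mul, norm_mul, norm_mul, hd, hd', Complex.norm_real, Complex.norm_real,
      Complex.norm_real, Real.norm_eq_abs, Real.norm_eq_abs, Real.norm_eq_abs, abs_of_nonneg (hP0 i j), abs_of_nonneg (hPQ0 j l),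
      abs_of_nonneg (hQ0 l m)]
    ring
  set t : Fin N → Fin N → ℝ := fun i m => ∑ l, ∑ j, P i j * (P * Q) j l * Q l m with ht_def
  have hbound : ∀ i m, ‖R i m‖ ≤ t i m := by
    intro i m
    rw [hRf]
    calc ‖∑ l, ∑ j, (P i j : ℂ) * d j * ((P * Q) j l : ℂ) * d' l * (Q l m : ℂ)‖
        ≤ ∑ l, ‖∑ j, (P i j : ℂ) * d j * ((P * Q) j l : ℂ) * d' l * (Q l m : ℂ)‖ :=
          norm_sum_le _ _
      _ ≤ ∑ l, ∑ j, ‖(P i j : ℂ) * d j * ((P * Q) j l : ℂ) * d' l * (Q l m : ℂ)‖ :=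
          Finset.sum_le_sum fun l _ => norm_sum_le _ _
      _ = t i m := by
          refine Finset.sum_congr rfl fun l _ => Finset.sum_congr rfl fun j _ => habs_f i m j l
  have ht1 : ∀ i, ∑ m, t i m = 1 := by
    intro i
    rw [ht_def]
    simp only
    rw [Finset.sum_comm]
    have e2 : ∀ l, ∑ m, ∑ j, P i j * (P * Q) j l * Q l m
        = ∑ j, P i j * (P * Q) j l := by
      intro l
      rw [Finset.sum_comm]
      refine Finset.sum_congr rfl fun j _ => ?_
      rw [← Finset.mul_sum, hQrow l, mul_one]
    rw [Finset.sum_congr rfl fun l _ => e2 l, Finset.sum_comm]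
    have e3 : ∀ j, ∑ l, P i j * (P * Q) j l = P i j := by
      intro j
      rw [← Finset.mul_sum, hPQrow j, mul_one]
    rw [Finset.sum_congr rfl fun j _ => e3 j, hProw i]
  have htnn : ∀ i m, 0 ≤ t i m := fun i m =>
    Finset.sum_nonneg fun l _ => Finset.sum_nonneg fun j _ =>
      mul_nonneg (mul_nonneg (hP0 i j) (hPQ0 j l)) (hQ0 l m)
  constructor
  · intro i
    calc ∑ m, ‖R i m‖ ≤ ∑ m, t i m := Finset.sum_le_sum fun m _ => hbound i m
      _ = 1 := ht1 i
  · intro i hsum1 m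
    -- termwise equality of abs and bound
    have habs_eq : ‖R i m‖ = t i m := by
      have h0 : ∑ m, (t i m - ‖R i m‖) = 0 := by
        rw [Finset.sum_sub_distrib, ht1 i, hsum1, sub_self]
      have := (Finset.sum_eq_zero_iff_of_nonneg
        (fun m _ => sub_nonneg.mpr (hbound i m))).mp h0 m (Finset.mem_univ m)
      linarith [this]
    -- apply the key lemma on the product index set
    set x : Fin N × Fin N → ℂ := fun p =>
      (P i p.2 : ℂ) * d p.2 * ((P * Q) p.2 p.1 : ℂ) * d' p.1 * (Q p.1 m : ℂ) with hx_def
    have hxsum : ∑ p, x p = R i m := by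
      rw [Fintype.sum_prod_type, hRf]
    have hxabs : ∑ p, ‖x p‖ = t i m := by
      rw [Fintype.sum_prod_type]
      refine Finset.sum_congr rfl fun l _ => Finset.sum_congr rfl fun j _ => ?_
      exact habs_f i m j l
    obtain ⟨c, hc⟩ := abs_sum_key Finset.univ x (by rw [hxsum, hxabs, habs_eq])
    refine ⟨c, fun j l hj hjl hl => ?_⟩
    have ha : ((P i j * (P * Q) j l * Q l m : ℝ) : ℂ) ≠ 0 := by
      exact_mod_cast mul_ne_zero (mul_ne_zero hj hjl) hl
    apply mul_left_cancel₀ ha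
    have hcjl := hc (l, j) (Finset.mem_univ _)
    rw [hx_def] at hcjl
    simp only at hcjl
    rw [habs_f i m j l] at hcjl
    calc ((P i j * (P * Q) j l * Q l m : ℝ) : ℂ) * (d j * d' l)
        = (P i j : ℂ) * d j * ((P * Q) j l : ℂ) * d' l * (Q l m : ℂ) := by push_cast; ring
      _ = ((P i j * (P * Q) j l * Q l m : ℝ) : ℂ) * c := hcjl
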